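/- Let x = (x_1, ..., x_N) be a real vector with strictly increasing positive entries. Then the symmetric Cauchy matrix C with entries C_{ij} = 1/(x_i + x_j) is positive definite. -/

import Mathlib

open MeasureTheory Real Set Matrix
set_option maxHeartbeats 1000000

private lemma integral_exp_neg_mul_Ioi_zero {b : ℝ} (hb : 0 < b) :
    ∫ t in Ioi (0:ℝ), Real.exp (-b * t) = 1/b := by
  have := MeasureTheory.integral_comp_mul_left_Ioi (fun s => Real.exp (-s)) 0 hb
  simp only [mul_zero] at this
  simp only [neg_mul]
  rw [this, integral_exp_neg_Ioi_zero, smul_eq_mul, mul_one, one_div]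

theorem cauchy_matrix_posDef (N : ℕ) (x : Fin N → ℝ)
    (hpos : ∀ i, 0 < x i) (hmono : StrictMono x) :
    (Matrix.of fun i j : Fin N => 1 / (x i + x j)).PosDef := by
  rw [Matrix.posDef_iff_dotProduct_mulVec]
  constructor
  · ext i j
    simp [Matrix.IsHermitian, Matrix.conjTranspose, add_comm]
  intro v hv
  -- the function whose square integrates to the quadratic form
  set f : ℝ → ℝ := fun t => ∑ i, v i * Real.exp (-x i * t) with hf
  have hcont : Continuous f := by
    apply continuous_finset_sum
    intro i _
    exact (continuous_const.mul ((continuous_const.mul continuous_id).rexp))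
  -- integrability of each cross term
  have hint : ∀ i j : Fin N, IntegrableOn
      (fun t => v i * v j * Real.exp (-(x i + x j) * t)) (Ioi 0) := by
    intro i j
    exact (exp_neg_integrableOn_Ioi 0 (by linarith [hpos i, hpos j])).const_mul _
  have hfsq : ∀ t : ℝ, f t ^ 2 = ∑ i, ∑ j, v i * v j * Real.exp (-(x i + x j) * t) := by
    intro t
    rw [sq, hf, Finset.sum_mul_sum]
    refine Finset.sum_congr rfl fun i _ => Finset.sum_congr rfl fun j _ => ?_
    rw [show (-(x i + x j) * t) = (-x i * t) + (-x j * t) by ring, Real.exp_add]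
    ring
  have hfsq_int : IntegrableOn (fun t => f t ^ 2) (Ioi 0) := by
    have : IntegrableOn (fun t => ∑ i, ∑ j : Fin N,
        v i * v j * Real.exp (-(x i + x j) * t)) (Ioi 0) := by
      apply MeasureTheory.integrable_finset_sum
      intro i _
      exact MeasureTheory.integrable_finset_sum _ (fun j _ => hint i j)
    exact this.congr_fun (fun t _ => (hfsq t).symm) measurableSet_Ioi
  -- the quadratic form equals the integral of f²
  have hquad : star v ⬝ᵥ (Matrix.of fun i j : Fin N => 1 / (x i + x j)) *ᵥ v
      = ∫ t in Ioi (0:ℝ), f t ^ 2 := by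
    have h1 : ∫ t in Ioi (0:ℝ), f t ^ 2
        = ∑ i, ∑ j, v i * v j * (1 / (x i + x j)) := by
      rw [MeasureTheory.setIntegral_congr_fun measurableSet_Ioi
        (fun t _ => hfsq t)]
      rw [MeasureTheory.integral_finset_sum _ (fun i _ =>
        MeasureTheory.integrable_finset_sum _ (fun j _ => hint i j))]
      refine Finset.sum_congr rfl fun i _ => ?_
      rw [MeasureTheory.integral_finset_sum _ (fun j _ => hint i j)]
      refine Finset.sum_congr rfl fun j _ => ?_
      rw [MeasureTheory.integral_const_mul,
        integral_exp_neg_mul_Ioi_zero (by linarith [hpos i, hpos j])]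
    rw [h1]
    simp only [dotProduct, Matrix.mulVec, dotProduct, Matrix.of_apply,
      star_trivial, Pi.star_apply]
    refine Finset.sum_congr rfl fun i _ => ?_
    rw [Finset.mul_sum]
    refine Finset.sum_congr rfl fun j _ => ?_
    ring
  rw [hquad]
  -- positivity
  rcases lt_or_eq_of_le (MeasureTheory.setIntegral_nonneg measurableSet_Ioi
    (fun t _ => sq_nonneg (f t))) with h | h
  · exact h
  exfalso
  -- integral zero ⇒ f ≡ 0 on Ioi 0
  have hae : (fun t => f t ^ 2) =ᵐ[volume.restrict (Ioi 0)] 0 := by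
    rw [← MeasureTheory.integral_eq_zero_iff_of_nonneg
      (fun t => sq_nonneg (f t)) hfsq_int]
    exact h.symm
  have hzero : ∀ t ∈ Ioi (0:ℝ), f t = 0 := by
    by_contra hc
    push_neg at hc
    obtain ⟨t0, ht0, hft0⟩ := hc
    set U : Set ℝ := Ioi 0 ∩ {t | f t ≠ 0} with hU
    have hUopen : IsOpen U := isOpen_Ioi.inter (isOpen_ne_fun hcont continuous_const)
    have hUne : U.Nonempty := ⟨t0, ht0, hft0⟩
    have hU0 : volume U = 0 := by
      have h2 := MeasureTheory.ae_iff.mp hae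
      rw [Measure.restrict_apply₀' measurableSet_Ioi.nullMeasurableSet] at h2
      have hUeq : U = {a | ¬ (fun t => f t ^ 2) a = (0 : ℝ → ℝ) a} ∩ Ioi 0 := by
        ext t
        simp only [hU, mem_inter_iff, mem_Ioi, mem_setOf_eq, Pi.zero_apply,
          sq_eq_zero_iff, ne_eq]
        tauto
      rw [hUeq]
      exact h2
    exact (hUopen.measure_pos volume hUne).ne' hU0
  -- Vandermonde: f ≡ 0 on Ioi 0 ⇒ v = 0
  apply hv
  have hzinj : Function.Injective (fun i => Real.exp (-(x i))) := by
    intro i j hij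
    simp only [Real.exp_eq_exp, neg_inj] at hij
    exact hmono.injective hij
  have key : (fun i => v i * Real.exp (-(x i))) = 0 := by
    apply Matrix.eq_zero_of_forall_pow_sum_mul_pow_eq_zero hzinj
    intro k
    have ht : ((k : ℕ) + 1 : ℝ) ∈ Ioi (0:ℝ) := mem_Ioi.mpr (by positivity)
    have := hzero _ ht
    rw [hf] at this
    rw [← this]
    refine Finset.sum_congr rfl fun j _ => ?_
    rw [mul_assoc, ← pow_succ', ← Real.exp_nat_mul]
    congr 1
    push_cast
    ring_nf
  funext i
  have := congrFun key i
  simp only [Pi.zero_apply, mul_eq_zero] at this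
  rcases this with h' | h'
  · exact h'
  · exact absurd h' (Real.exp_ne_zero _)
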